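/- Let A ⊆ C be a ring extension of exponent one with a p-basis {x_1,…,x_n}, and let A → A' be a ring homomorphism such that for each i there exists y_i ∈ A' with y_i^p equal to the image of x_i^p. Then the elements z_i := x_i ⊗ 1 − 1 ⊗ y_i form a p-basis of C ⊗_A A' over A' with z_i^p = 0; in particular C ⊗_A A' ≅ A'[X_1,…,X_n]/⟨X_1^p,…,X_n^p⟩ as A'-algebras. -/

import Mathlib

/-- `x : Fin n → C` is a *p-basis* of `C` over `A` if the monomials
`x₁^{α₁} ⋯ xₙ^{αₙ}` with `0 ≤ αᵢ < p` form a basis of `C` as an `A`-module. -/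
def IsPBasis (p : ℕ) (A : Type*) {C : Type*} [CommRing A] [CommRing C] [Algebra A C] {n : ℕ}
    (x : Fin n → C) : Prop :=
  LinearIndependent A (fun α : Fin n → Fin p => ∏ i, x i ^ (α i : ℕ)) ∧
    Submodule.span A (Set.range fun α : Fin n → Fin p => ∏ i, x i ^ (α i : ℕ)) = ⊤

open scoped TensorProduct

attribute [local instance] Algebra.TensorProduct.rightAlgebra


noncomputable def commRight (A C A' : Type*) [CommRing A] [CommRing C] [CommRing A']
    [Algebra A C] [Algebra A A'] : (A' ⊗[A] C) ≃ₗ[A'] (C ⊗[A] A') where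
  toFun := Algebra.TensorProduct.comm A A' C
  invFun := (Algebra.TensorProduct.comm A A' C).symm
  left_inv := fun t => by simp
  right_inv := fun t => by simp
  map_add' := map_add _
  map_smul' := fun a t => by
    induction t using TensorProduct.induction_on with
    | zero => simp
    | tmul b c =>
      simp only [RingHom.id_apply, TensorProduct.smul_tmul', Algebra.TensorProduct.comm_tmul,
        smul_eq_mul]
      show _ = (1 : C) ⊗ₜ[A] a * (c ⊗ₜ[A] b)
      rw [Algebra.TensorProduct.tmul_mul_tmul, one_mul, mul_comm]
    | add u v hu hv =>
      simp only [RingHom.id_apply] at hu hv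
      simp only [smul_add, map_add, hu, hv, RingHom.id_apply]

@[simp] lemma commRight_tmul {A C A' : Type*} [CommRing A] [CommRing C] [CommRing A']
    [Algebra A C] [Algebra A A'] (b : A') (c : C) :
    commRight A C A' (b ⊗ₜ[A] c) = c ⊗ₜ[A] b := rfl

lemma linearIndependent_of_span_eq_top {R M ι : Type*} [CommRing R] [AddCommGroup M] [Module R M]
    [Fintype ι] (b : Module.Basis ι R M) (v : ι → M) (hv : Submodule.span R (Set.range v) = ⊤) :
    LinearIndependent R v := by
  haveI : Module.Finite R (ι →₀ R) :=
    Module.Finite.equiv (Finsupp.linearEquivFunOnFinite R R ι).symm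
  have hT : Function.Surjective (Finsupp.linearCombination R v) := by
    rw [← LinearMap.range_eq_top, Finsupp.range_linearCombination, hv]
  set f : (ι →₀ R) →ₗ[R] (ι →₀ R) :=
    b.repr.toLinearMap ∘ₗ Finsupp.linearCombination R v with hf
  have hfs : Function.Surjective f := b.repr.surjective.comp hT
  have hinj := OrzechProperty.injective_of_surjective_endomorphism f hfs
  rw [linearIndependent_iff_injective_finsuppLinearCombination]
  intro s t hst
  exact hinj (by simp [hf, hst])

lemma span_monpow_eq_top {A' S : Type*} [CommRing A'] [CommRing S] [Algebra A' S]
    {p n : ℕ} (g : MvPolynomial (Fin n) A' →ₐ[A'] S)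
    (hg : Function.Surjective g) (hgp : ∀ i, g (MvPolynomial.X i) ^ p = 0) :
    Submodule.span A' (Set.range fun α : Fin n → Fin p =>
      ∏ i, g (MvPolynomial.X i) ^ ((α i : ℕ))) = ⊤ := by
  have hmon : ∀ d : Fin n →₀ ℕ, g (MvPolynomial.monomial d 1) = ∏ i, g (MvPolynomial.X i) ^ (d i) := by
    intro d
    rw [MvPolynomial.monomial_eq, map_one, one_mul,
      Finsupp.prod_fintype _ _ (fun i => pow_zero _), map_prod]
    simp [map_pow]
  have key : ∀ d : Fin n →₀ ℕ, g (MvPolynomial.monomial d 1) ∈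
      Submodule.span A' (Set.range fun α : Fin n → Fin p =>
        ∏ i, g (MvPolynomial.X i) ^ ((α i : ℕ))) := by
    intro d
    by_cases hd : ∀ i, d i < p
    · refine (hmon d) ▸ Submodule.subset_span ⟨fun i => ⟨d i, hd i⟩, rfl⟩
    · push_neg at hd
      obtain ⟨i, hi⟩ := hd
      have h0 : g (MvPolynomial.monomial d 1) = 0 := by
        rw [hmon d]
        refine Finset.prod_eq_zero (Finset.mem_univ i) ?_
        rw [← Nat.add_sub_cancel' hi, pow_add, hgp i, zero_mul]
      rw [h0]; exact Submodule.zero_mem _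
  rw [eq_top_iff]
  intro s _
  obtain ⟨q, rfl⟩ := hg s
  have hq : q ∈ Submodule.span A' (Set.range fun d : Fin n →₀ ℕ =>
      (MvPolynomial.monomial d (1 : A') : MvPolynomial (Fin n) A')) := by
    have h := (MvPolynomial.basisMonomials (Fin n) A').span_eq
    rw [MvPolynomial.coe_basisMonomials] at h
    rw [h]; trivial
  have h2 := Submodule.mem_map_of_mem (f := g.toLinearMap) hq
  rw [Submodule.map_span] at h2
  refine Submodule.span_le.mpr ?_ h2
  rintro _ ⟨_, ⟨d, rfl⟩, rfl⟩
  exact key d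

theorem stmt11 (p : ℕ) (hp : p.Prime) (A C A' : Type*) [CommRing A] [CommRing C]
    [CommRing A'] [Algebra A C] [Algebra A A'] [CharP C p]
    (hexp : ∀ c : C, ∃ a : A, algebraMap A C a = c ^ p)
    (n : ℕ) (x : Fin n → C) (hx : IsPBasis p A x)
    (y : Fin n → A')
    (hy : ∀ i, ∃ a : A, algebraMap A C a = x i ^ p ∧ (y i) ^ p = algebraMap A A' a) :
    (IsPBasis p A' (fun i => (x i ⊗ₜ[A] (1 : A') - (1 : C) ⊗ₜ[A] y i : C ⊗[A] A'))) ∧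
      (∀ i, (x i ⊗ₜ[A] (1 : A') - (1 : C) ⊗ₜ[A] y i : C ⊗[A] A') ^ p = 0) ∧
      Nonempty ((C ⊗[A] A') ≃ₐ[A']
        (MvPolynomial (Fin n) A' ⧸
          Ideal.span (Set.range fun i : Fin n =>
            (MvPolynomial.X i : MvPolynomial (Fin n) A') ^ p))) := by
  classical
  set z : Fin n → C ⊗[A] A' := fun i => x i ⊗ₜ[A] (1 : A') - (1 : C) ⊗ₜ[A] y i with hzdef
  -- z i ^ p = 0
  have hp0 : ((p : ℕ) : C ⊗[A] A') = 0 := by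
    have h : ((p : ℕ) : C ⊗[A] A') =
        Algebra.TensorProduct.includeLeftRingHom (R := A) (B := A') ((p : ℕ) : C) := by
      rw [map_natCast]
    rw [h, CharP.cast_eq_zero C p, map_zero]
  have hz : ∀ i, z i ^ p = 0 := by
    intro i
    obtain ⟨a, ha1, ha2⟩ := hy i
    have hup : (x i ⊗ₜ[A] (1 : A')) ^ p = (1 : C) ⊗ₜ[A] ((y i) ^ p) := by
      rw [Algebra.TensorProduct.tmul_pow, one_pow, ← ha1, ha2,
        Algebra.algebraMap_eq_smul_one, Algebra.algebraMap_eq_smul_one,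
        TensorProduct.smul_tmul]
    rw [hzdef]
    simp only []
    rw [sub_eq_add_neg, add_pow_prime_eq hp, hp0]; simp only [zero_mul, add_zero]; rw [hup, neg_pow,
      Algebra.TensorProduct.tmul_pow, one_pow]
    rcases hp.eq_two_or_odd' with h2 | hodd
    · subst h2; norm_num
      rw [← two_mul, ← Nat.cast_ofNat (n := 2), hp0, zero_mul]
    · rw [hodd.neg_one_pow]; ring
  -- basis of C ⊗ A' over A'
  set bC : Module.Basis (Fin n → Fin p) A C := Module.Basis.mk hx.1 hx.2.ge with hbCdef
  set bD : Module.Basis (Fin n → Fin p) A' (C ⊗[A] A') :=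
    (bC.baseChange A').map (commRight A C A') with hbDdef
  have hbD : ∀ α : Fin n → Fin p, bD α = (∏ i, x i ^ (α i : ℕ)) ⊗ₜ[A] (1 : A') := by
    intro α
    rw [hbDdef, Module.Basis.map_apply, Module.Basis.baseChange_apply, commRight_tmul, hbCdef,
      Module.Basis.mk_apply]
  -- the algebra map
  set φ : MvPolynomial (Fin n) A' →ₐ[A'] C ⊗[A] A' := MvPolynomial.aeval z with hφdef
  have hφX : ∀ i, φ (MvPolynomial.X i) = z i := fun i => MvPolynomial.aeval_X _ _
  -- surjectivity of φ
  have hx1mem : ∀ i, x i ⊗ₜ[A] (1 : A') ∈ φ.range := by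
    intro i
    have h1 : z i ∈ φ.range := ⟨MvPolynomial.X i, hφX i⟩
    have h2 : (1 : C) ⊗ₜ[A] y i ∈ φ.range := by
      have h : (1 : C) ⊗ₜ[A] y i = algebraMap A' (C ⊗[A] A') (y i) := rfl
      rw [h]; exact φ.range.algebraMap_mem _
    have h3 := add_mem h1 h2
    rwa [hzdef, sub_add_cancel] at h3
  have hφs : Function.Surjective φ := by
    intro d
    have htop : (⊤ : Submodule A' (C ⊗[A] A')) ≤ Subalgebra.toSubmodule φ.range := by
      rw [← bD.span_eq]
      refine Submodule.span_le.mpr ?_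
      rintro _ ⟨α, rfl⟩
      rw [hbD]
      have hprod : (∏ i, x i ^ (α i : ℕ)) ⊗ₜ[A] (1 : A') =
          ∏ i, (x i ⊗ₜ[A] (1 : A')) ^ (α i : ℕ) := by
        have h : ∀ c : C, c ⊗ₜ[A] (1 : A') =
            Algebra.TensorProduct.includeLeftRingHom (R := A) (B := A') c := fun _ => rfl
        rw [h, map_prod]
        simp only [map_pow, Algebra.TensorProduct.includeLeftRingHom_apply]
      rw [hprod]
      exact (Subalgebra.mem_toSubmodule _).mpr (prod_mem fun i _ => pow_mem (hx1mem i) _)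
    exact htop trivial
  -- span and independence of z-monomials
  have hspanz : Submodule.span A' (Set.range fun α : Fin n → Fin p =>
      ∏ i, z i ^ ((α i : ℕ))) = ⊤ := by
    have h := span_monpow_eq_top (p := p) φ hφs (fun i => by rw [hφX i]; exact hz i)
    simpa only [hφX] using h
  have hind : LinearIndependent A' (fun α : Fin n → Fin p => ∏ i, z i ^ ((α i : ℕ))) :=
    linearIndependent_of_span_eq_top bD _ hspanz
  refine ⟨⟨hind, hspanz⟩, hz, ?_⟩
  -- the quotient ring
  set I : Ideal (MvPolynomial (Fin n) A') :=
    Ideal.span (Set.range fun i : Fin n => (MvPolynomial.X i : MvPolynomial (Fin n) A') ^ p)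
    with hIdef
  have hker : ∀ q ∈ I, φ q = 0 := by
    have hle : I ≤ RingHom.ker (φ : MvPolynomial (Fin n) A' →+* C ⊗[A] A') := by
      rw [hIdef, Ideal.span_le]
      rintro _ ⟨i, rfl⟩
      simp only [SetLike.mem_coe, RingHom.mem_ker, AlgHom.coe_toRingHom, map_pow, hφX, hz]
    exact fun q hq => hle hq
  set φbar : (MvPolynomial (Fin n) A' ⧸ I) →ₐ[A'] C ⊗[A] A' :=
    Ideal.Quotient.liftₐ I φ hker with hφbardef
  have hφbarmk : ∀ q, φbar (Ideal.Quotient.mkₐ A' I q) = φ q := fun q =>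
    Ideal.Quotient.liftₐ_apply I φ hker _
  have hmkX : ∀ i, (Ideal.Quotient.mkₐ A' I (MvPolynomial.X i)) ^ p = 0 := by
    intro i
    rw [← map_pow]
    simp only [Ideal.Quotient.mkₐ_eq_mk]
    exact Ideal.Quotient.eq_zero_iff_mem.mpr (Ideal.subset_span ⟨i, rfl⟩)
  have hXspan := span_monpow_eq_top (p := p) (Ideal.Quotient.mkₐ A' I)
    (Ideal.Quotient.mkₐ_surjective A' I) hmkX
  have hsurjbar : Function.Surjective φbar := fun d => by
    obtain ⟨q, hq⟩ := hφs d
    exact ⟨Ideal.Quotient.mkₐ A' I q, by rw [hφbarmk, hq]⟩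
  have hinjbar : Function.Injective φbar := by
    have hc : Function.Surjective (Finsupp.linearCombination A'
        (fun α : Fin n → Fin p => ∏ i, (Ideal.Quotient.mkₐ A' I (MvPolynomial.X i)) ^ (α i : ℕ))) := by
      rw [← LinearMap.range_eq_top, Finsupp.range_linearCombination, hXspan]
    rw [injective_iff_map_eq_zero]
    intro r hr
    obtain ⟨f, rfl⟩ := hc r
    have hcomp : φbar (Finsupp.linearCombination A'
        (fun α : Fin n → Fin p => ∏ i, (Ideal.Quotient.mkₐ A' I (MvPolynomial.X i)) ^ (α i : ℕ)) f) =
        Finsupp.linearCombination A' (fun α : Fin n → Fin p => ∏ i, z i ^ (α i : ℕ)) f := by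
      rw [Finsupp.linearCombination_apply, Finsupp.linearCombination_apply, map_finsuppSum]
      refine Finsupp.sum_congr fun α _ => ?_
      rw [map_smul, map_prod]
      congr 1
      refine Finset.prod_congr rfl fun i _ => ?_
      rw [map_pow, hφbarmk, hφX]
    rw [hcomp] at hr
    have hf0 : f = 0 := hind (by rw [hr, map_zero])
    rw [hf0, map_zero]
  exact ⟨(AlgEquiv.ofBijective φbar ⟨hinjbar, hsurjbar⟩).symm⟩
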